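/- Let X be a set and let φ, ψ, η be bijections of X. Let U ⊆ X, suppose φ and ψ are supported in U, and suppose η displaces U, i.e. η(U) ∩ U = ∅. Set θ := φηφ⁻¹η⁻¹. Then θψθ⁻¹ψ⁻¹ = φψφ⁻¹ψ⁻¹, i.e. [θ, ψ] = [φ, ψ]. (This is the combinatorial claim in the proof of the paper's Lemma 3.10.) -/

import Mathlib

/-- If `φ, ψ` are bijections of `X` supported in `U` and `η` displaces `U`,
then with `θ := φ η φ⁻¹ η⁻¹` one has `[θ, ψ] = [φ, ψ]`. -/
theorem stmt_2 {X : Type*} (φ ψ η : Equiv.Perm X) (U : Set X)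
    (hφ : ∀ p ∉ U, φ p = p) (hψ : ∀ p ∉ U, ψ p = p)
    (hη : ⇑η '' U ∩ U = ∅) :
    (φ * η * φ⁻¹ * η⁻¹) * ψ * (φ * η * φ⁻¹ * η⁻¹)⁻¹ * ψ⁻¹
      = φ * ψ * φ⁻¹ * ψ⁻¹ := by
  have hφ' : ∀ p ∉ U, φ⁻¹ p = p := fun p hp => by
    have h := hφ p hp
    simpa using congrArg (⇑φ⁻¹) h.symm
  set a : Equiv.Perm X := η * φ⁻¹ * η⁻¹ with ha
  have hd : Equiv.Perm.Disjoint a ψ := by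
    intro x
    by_cases hx : x ∈ U
    · left
      have hηx : η⁻¹ x ∉ U := by
        intro h
        have hmem : η (η⁻¹ x) ∈ ⇑η '' U ∩ U := ⟨⟨_, h, rfl⟩, by simpa using hx⟩
        rw [hη] at hmem
        exact hmem
      simp only [ha, Equiv.Perm.mul_apply, hφ' _ hηx]; simp
    · right; exact hψ x hx
  have hc : a * ψ = ψ * a := hd.commute.eq
  have key : a * ψ * a⁻¹ = ψ := by rw [hc]; group
  calc (φ * η * φ⁻¹ * η⁻¹) * ψ * (φ * η * φ⁻¹ * η⁻¹)⁻¹ * ψ⁻¹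
      = φ * (a * ψ * a⁻¹) * φ⁻¹ * ψ⁻¹ := by rw [ha]; group
    _ = φ * ψ * φ⁻¹ * ψ⁻¹ := by rw [key]
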